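/- Let m ≥ 1, let 0 = δ_0 < δ_1 < δ_2 < … < δ_m be real numbers and η_1, …, η_m > 0, and define the real polynomial h(X) = ∏_{i=1}^{m}(X + δ_i) − Σ_{j=1}^{m} η_j ∏_{i≠j}(X + δ_i). If h(0) > 0, then for each 1 ≤ i ≤ m the polynomial h has a root in the open interval (−δ_i, −δ_{i−1}); in particular, h has m distinct real roots, all of which are negative. -/

import Mathlib

lemma ivt_root {f : ℝ → ℝ} (hf : Continuous f) {a b : ℝ} (hab : a < b)
    (hsign : f a * f b < 0) : ∃ x ∈ Set.Ioo a b, f x = 0 := by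
  rcases mul_neg_iff.mp hsign with ⟨ha, hb⟩ | ⟨ha, hb⟩
  · obtain ⟨x, hx, hfx⟩ := intermediate_value_Ioo' hab.le hf.continuousOn
      (Set.mem_Ioo.mpr ⟨hb, ha⟩)
    exact ⟨x, hx, hfx⟩
  · obtain ⟨x, hx, hfx⟩ := intermediate_value_Ioo hab.le hf.continuousOn
      (Set.mem_Ioo.mpr ⟨ha, hb⟩)
    exact ⟨x, hx, hfx⟩

lemma prod_neg_aux {m : ℕ} (s : Finset (Fin m)) (g : Fin m → ℝ) :
    ∏ k ∈ s, (-(g k)) = (-1) ^ s.card * ∏ k ∈ s, g k := by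
  calc ∏ k ∈ s, (-(g k)) = ∏ k ∈ s, ((-1) * g k) := by simp
    _ = (∏ _k ∈ s, (-1 : ℝ)) * ∏ k ∈ s, g k := Finset.prod_mul_distrib
    _ = (-1) ^ s.card * ∏ k ∈ s, g k := by rw [Finset.prod_const]

/-- For `0 = δ₀ < δ₁ < … < δₘ` and `ηⱼ > 0`, the polynomial
`h(X) = ∏ᵢ(X + δᵢ) - ∑ⱼ ηⱼ ∏_{i≠j}(X + δᵢ)` with `h(0) > 0` has a root in each
interval `(-δᵢ, -δ_{i-1})`; in particular it has `m` distinct negative real roots. -/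
theorem stmt_8 (m : ℕ) (hm : 1 ≤ m) (δ : Fin (m + 1) → ℝ) (η : Fin m → ℝ)
    (hδ0 : δ 0 = 0) (hδ : StrictMono δ) (hη : ∀ j, 0 < η j)
    (h : ℝ → ℝ)
    (hh : ∀ X, h X = ∏ i : Fin m, (X + δ i.succ) -
      ∑ j : Fin m, η j * ∏ i ∈ Finset.univ.erase j, (X + δ i.succ))
    (h0 : 0 < h 0) :
    (∀ i : Fin m, ∃ X ∈ Set.Ioo (-δ i.succ) (-δ i.castSucc), h X = 0) ∧
    ∃ ρ : Fin m → ℝ, Function.Injective ρ ∧ ∀ i, ρ i < 0 ∧ h (ρ i) = 0 := by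
  have hcont : Continuous h := by
    have he : h = fun X => ∏ i : Fin m, (X + δ i.succ) -
        ∑ j : Fin m, η j * ∏ i ∈ Finset.univ.erase j, (X + δ i.succ) := funext hh
    rw [he]
    fun_prop
  -- value at -δ i.succ
  have hval : ∀ i : Fin m, h (-(δ i.succ)) =
      -(η i * ∏ k ∈ Finset.univ.erase i, (δ k.succ - δ i.succ)) := by
    intro i
    rw [hh]
    have h1 : ∏ k : Fin m, (-(δ i.succ) + δ k.succ) = 0 :=
      Finset.prod_eq_zero (Finset.mem_univ i) (by ring)
    have h2 : ∑ j : Fin m, η j * ∏ k ∈ Finset.univ.erase j, (-(δ i.succ) + δ k.succ)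
        = η i * ∏ k ∈ Finset.univ.erase i, (δ k.succ - δ i.succ) := by
      rw [Finset.sum_eq_single i]
      · congr 1
        exact Finset.prod_congr rfl fun k _ => by ring
      · intro j _ hji
        have hz : ∏ k ∈ Finset.univ.erase j, (-(δ i.succ) + δ k.succ) = 0 :=
          Finset.prod_eq_zero (Finset.mem_erase.mpr ⟨fun he => hji he.symm, Finset.mem_univ i⟩)
            (by ring)
        rw [hz, mul_zero]
      · simp
    rw [h1, h2]
    ring
  -- sign at -δ i.succ
  have hsign : ∀ i : Fin m, (-1 : ℝ) ^ (i : ℕ) * h (-(δ i.succ)) < 0 := by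
    intro i
    rw [hval]
    have hsplit : Finset.univ.erase i = Finset.Iio i ∪ Finset.Ioi i := by
      ext k
      simp only [Finset.mem_erase, Finset.mem_univ, and_true, Finset.mem_union,
        Finset.mem_Iio, Finset.mem_Ioi]
      exact ⟨fun hk => lt_or_gt_of_ne hk, fun hk => hk.elim ne_of_lt ne_of_gt⟩
    have hdisj : Disjoint (Finset.Iio i) (Finset.Ioi i) := by
      rw [Finset.disjoint_left]
      intro k hk hk'
      exact absurd (Finset.mem_Ioi.mp hk') (lt_asymm (Finset.mem_Iio.mp hk))
    rw [hsplit, Finset.prod_union hdisj]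
    have hIio : ∏ k ∈ Finset.Iio i, (δ k.succ - δ i.succ)
        = (-1) ^ (i : ℕ) * ∏ k ∈ Finset.Iio i, (δ i.succ - δ k.succ) := by
      rw [← Fin.card_Iio i, ← prod_neg_aux]
      exact Finset.prod_congr rfl fun k _ => by ring
    rw [hIio]
    have hA : 0 < ∏ k ∈ Finset.Iio i, (δ i.succ - δ k.succ) :=
      Finset.prod_pos fun k hk =>
        sub_pos.mpr (hδ (Fin.succ_lt_succ_iff.mpr (Finset.mem_Iio.mp hk)))
    have hB : 0 < ∏ k ∈ Finset.Ioi i, (δ k.succ - δ i.succ) :=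
      Finset.prod_pos fun k hk =>
        sub_pos.mpr (hδ (Fin.succ_lt_succ_iff.mpr (Finset.mem_Ioi.mp hk)))
    have hsq : ((-1 : ℝ) ^ (i : ℕ)) * ((-1 : ℝ) ^ (i : ℕ)) = 1 := by
      rw [← pow_add]
      exact Even.neg_one_pow ⟨(i : ℕ), rfl⟩
    have := mul_pos (mul_pos (hη i) hA) hB
    nlinarith [this, hsq]
  -- sign at -δ i.castSucc
  have hsign' : ∀ i : Fin m, 0 < (-1 : ℝ) ^ (i : ℕ) * h (-(δ i.castSucc)) := by
    intro i
    rcases Nat.eq_zero_or_pos i.val with h0' | hpos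
    · have : i.castSucc = 0 := Fin.ext (by simp [h0'])
      rw [this, h0', hδ0]
      simpa using h0
    · obtain ⟨j, hj⟩ := Nat.exists_eq_add_of_lt hpos
      have hjm : j < m := lt_of_lt_of_le (Nat.lt_of_lt_of_le (Nat.lt_succ_self j)
        (by omega)) le_rfl
      set p : Fin m := ⟨j, hjm⟩ with hp
      have hcs : i.castSucc = p.succ := Fin.ext (by simp [hp]; omega)
      have hiv : (i : ℕ) = j + 1 := by omega
      rw [hcs, hiv, pow_succ]
      have := hsign p
      have hpv : ((p : ℕ)) = j := rfl
      nlinarith [this]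
  -- roots in each interval
  have hroots : ∀ i : Fin m, ∃ X ∈ Set.Ioo (-δ i.succ) (-δ i.castSucc), h X = 0 := by
    intro i
    apply ivt_root hcont (neg_lt_neg (hδ (Fin.castSucc_lt_succ : i.castSucc < i.succ)))
    have hsq : ((-1 : ℝ) ^ (i : ℕ)) * ((-1 : ℝ) ^ (i : ℕ)) = 1 := by
      rw [← pow_add]
      exact Even.neg_one_pow ⟨(i : ℕ), rfl⟩
    nlinarith [hsign i, hsign' i]
  refine ⟨hroots, fun i => (hroots i).choose, ?_, ?_⟩
  · intro i j hij
    by_contra hne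
    have key : ∀ a b : Fin m, a < b → (hroots a).choose ≠ (hroots b).choose := by
      intro a b hab heq
      obtain ⟨ha1, ha2⟩ := (hroots a).choose_spec.1
      obtain ⟨hb1, hb2⟩ := (hroots b).choose_spec.1
      have hle : a.succ ≤ b.castSucc := Fin.succ_le_castSucc_iff.mpr hab
      have : -δ b.castSucc ≤ -δ a.succ := neg_le_neg (hδ.monotone hle)
      linarith [heq ▸ hb2]
    rcases lt_trichotomy i j with hlt | heq | hgt
    · exact key i j hlt hij
    · exact hne heq
    · exact key j i hgt hij.symm
  · intro i
    obtain ⟨⟨h1, h2⟩, h3⟩ := (hroots i).choose_spec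
    refine ⟨lt_of_lt_of_le h2 ?_, h3⟩
    have : δ 0 ≤ δ i.castSucc := hδ.monotone (Fin.zero_le _)
    rw [hδ0] at this
    linarith
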